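/- If an orientation-preserving circle homeomorphism f has irrational rotation number, then the ω-limit set ω(x) is the same set for every point x of the circle, and this set is either the whole circle or a perfect, nowhere dense subset of the circle. -/

import Mathlib

open Filter Topology Set

private lemma aux_plus_one_iter (F : ℝ → ℝ) (hFp : ∀ x, F (x + 1) = F x + 1) (n : ℕ) :
    ∀ x, F^[n] (x + 1) = F^[n] x + 1 := by
  induction n with
  | zero => simp
  | succ n ih =>
    intro x
    rw [Function.iterate_succ_apply, hFp, Function.iterate_succ_apply, ih]

private lemma aux_int_trans (F : ℝ → ℝ) (hFp : ∀ x, F (x + 1) = F x + 1) :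
    ∀ (k : ℤ) (x : ℝ), F (x + k) = F x + k := by
  have hpos : ∀ (k : ℕ) (x : ℝ), F (x + k) = F x + k := by
    intro k
    induction k with
    | zero => simp
    | succ k ih =>
      intro x
      have h1 : (x + (k + 1 : ℕ) : ℝ) = (x + k) + 1 := by push_cast; ring
      rw [h1, hFp, ih]
      push_cast
      ring
  intro k x
  rcases le_or_gt 0 k with hk | hk
  · lift k to ℕ using hk
    exact_mod_cast hpos k x
  · set n : ℕ := (-k).toNat with hn
    have hn' : ((n : ℕ) : ℤ) = -k := Int.toNat_of_nonneg (by omega)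
    have hkn : ((n : ℕ) : ℝ) = -(k : ℝ) := by exact_mod_cast congrArg (Int.cast : ℤ → ℝ) hn'
    have h2 := hpos n (x + k)
    have h3 : (x + k) + (n : ℝ) = x := by rw [hkn]; ring
    rw [h3] at h2
    linarith [h2, hkn]

private lemma aux_lift_iter (f : AddCircle (1 : ℝ) ≃ₜ AddCircle (1 : ℝ)) (F : ℝ → ℝ)
    (hlift : ∀ x : ℝ, f (x : AddCircle (1 : ℝ)) = ((F x : ℝ) : AddCircle (1 : ℝ)))
    (n : ℕ) (x : ℝ) :
    (⇑f)^[n] (x : AddCircle (1 : ℝ)) = ((F^[n] x : ℝ) : AddCircle (1 : ℝ)) := by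
  induction n with
  | zero => simp
  | succ n ih =>
    rw [Function.iterate_succ_apply', ih, hlift, Function.iterate_succ_apply']

/-- no periodic points when the rotation number is irrational -/
private lemma aux_no_per (f : AddCircle (1 : ℝ) ≃ₜ AddCircle (1 : ℝ)) (F : ℝ → ℝ)
    (hFp : ∀ x, F (x + 1) = F x + 1)
    (hlift : ∀ x : ℝ, f (x : AddCircle (1 : ℝ)) = ((F x : ℝ) : AddCircle (1 : ℝ)))
    (τ : ℝ) (hτ : ∀ x : ℝ, Tendsto (fun n : ℕ => (F^[n] x - x) / n) atTop (𝓝 τ))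
    (hirr : Irrational τ) :
    ∀ (x : ℝ) (n : ℕ), 0 < n → (⇑f)^[n] (x : AddCircle (1 : ℝ)) ≠ (x : AddCircle (1 : ℝ)) := by
  intro x n hn h
  rw [aux_lift_iter f F hlift] at h
  rw [QuotientAddGroup.eq_iff_sub_mem] at h
  rw [AddSubgroup.mem_zmultiples_iff] at h
  obtain ⟨k, hk⟩ := h
  simp only [zsmul_eq_mul, mul_one] at hk
  -- F^[n] x = x + k
  have hFn : F^[n] x = x + k := by linarith
  have hint : ∀ (j : ℤ) (y : ℝ), F^[n] (y + j) = F^[n] y + j :=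
    aux_int_trans _ (aux_plus_one_iter F hFp n)
  have iter : ∀ j : ℕ, F^[n * j] x = x + j * k := by
    intro j
    induction j with
    | zero => simp
    | succ j ih =>
      have h1 : n * (j + 1) = n * j + n := by ring
      have hint2 : ∀ (y : ℝ), F^[n * j] (y + (k : ℝ)) = F^[n * j] y + k :=
        fun y => aux_int_trans _ (aux_plus_one_iter F hFp (n * j)) k y
      rw [h1, Function.iterate_add_apply, hFn, hint2, ih]
      push_cast
      ring
  have hmul : Tendsto (fun j : ℕ => n * j) atTop atTop := by
    apply tendsto_atTop_mono (fun j => Nat.le_mul_of_pos_left j hn) tendsto_id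
  have lim1 : Tendsto (fun j : ℕ => (F^[n * j] x - x) / (n * j : ℕ)) atTop (𝓝 τ) :=
    (hτ x).comp hmul
  have lim2 : Tendsto (fun j : ℕ => (F^[n * j] x - x) / (n * j : ℕ)) atTop (𝓝 ((k : ℝ) / n)) := by
    apply Tendsto.congr' _ tendsto_const_nhds
    filter_upwards [eventually_gt_atTop 0] with j hj
    rw [iter j]
    have hj0 : (j : ℝ) ≠ 0 := Nat.cast_ne_zero.2 hj.ne'
    have hn0 : (n : ℝ) ≠ 0 := Nat.cast_ne_zero.2 hn.ne'
    push_cast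
    field_simp
    ring
  have hτeq : τ = (k : ℝ) / n := tendsto_nhds_unique lim1 lim2
  apply hirr
  refine ⟨(k : ℚ) / (n : ℚ), ?_⟩
  rw [hτeq]
  push_cast
  ring

/-- covering lemma: iterates of the fundamental arc cover the circle -/
private lemma aux_cover (f : AddCircle (1 : ℝ) ≃ₜ AddCircle (1 : ℝ))
    (nper : ∀ (x : ℝ) (n : ℕ), 0 < n →
      (⇑f)^[n] (x : AddCircle (1 : ℝ)) ≠ (x : AddCircle (1 : ℝ)))
    (m : ℕ) (hm : 0 < m) (G : ℝ → ℝ) (hGc : Continuous G) (hGm : StrictMono G)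
    (hGl : ∀ t : ℝ, (⇑f)^[m] (t : AddCircle (1 : ℝ)) = ((G t : ℝ) : AddCircle (1 : ℝ)))
    (q : ℝ) :
    ∃ K : ℕ, ∀ z : AddCircle (1 : ℝ), ∃ k ≤ K, ∃ s ∈ Set.Icc (min q (G q)) (max q (G q)),
      (⇑f)^[k * m] (s : AddCircle (1 : ℝ)) = z := by
  classical
  have hGl_iter : ∀ (k : ℕ) (t : ℝ), (⇑f)^[k * m] (t : AddCircle (1 : ℝ))
      = ((G^[k] t : ℝ) : AddCircle (1 : ℝ)) := by
    intro k
    induction k with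
    | zero => simp
    | succ k ih =>
      intro t
      have h1 : (k + 1) * m = k * m + m := by ring
      rw [h1, Function.iterate_add_apply, hGl, ih, Function.iterate_succ_apply]
  have no_fix : ∀ L : ℝ, G L ≠ L := by
    intro L h
    exact nper L m hm (by rw [hGl, h])
  set c : ℕ → ℝ := fun k => G^[k] q with hc
  have hc_succ : ∀ k, c (k + 1) = G (c k) := by
    intro k; simp [hc, Function.iterate_succ_apply']
  rcases lt_or_gt_of_ne (no_fix q) with hdown | hup
  · -- G q < q, decreasing case
    have hstep : ∀ k, c (k + 1) < c k := by
      intro k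
      induction k with
      | zero => simpa [hc] using hdown
      | succ k ih =>
        have h := hGm ih
        rwa [← hc_succ (k + 1), ← hc_succ k] at h
    have hmono : StrictAnti c := strictAnti_nat_of_succ_lt hstep
    have hub : ∃ K, c K ≤ q - 1 := by
      by_contra hb
      push_neg at hb
      have hbdd : BddBelow (Set.range c) := ⟨q - 1, by
        rintro y ⟨k, rfl⟩; exact (hb k).le⟩
      have hlim : Tendsto c atTop (𝓝 (⨅ k, c k)) :=
        tendsto_atTop_ciInf hmono.antitone hbdd
      have h1 : Tendsto (fun k => c (k + 1)) atTop (𝓝 (⨅ k, c k)) :=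
        hlim.comp (tendsto_add_atTop_nat 1)
      have h2 : Tendsto (fun k => G (c k)) atTop (𝓝 (G (⨅ k, c k))) :=
        (hGc.tendsto _).comp hlim
      have h3 : Tendsto (fun k => c (k + 1)) atTop (𝓝 (G (⨅ k, c k))) :=
        h2.congr fun k => (hc_succ k).symm
      exact no_fix _ (tendsto_nhds_unique h3 h1)
    obtain ⟨K, hK⟩ := hub
    refine ⟨K, fun z => ?_⟩
    obtain ⟨x0, hx0⟩ := QuotientAddGroup.mk_surjective z
    set t : ℝ := q - Int.fract (q - x0) with ht
    have ht1 : t ≤ q := by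
      rw [ht]; linarith [Int.fract_nonneg (q - x0)]
    have ht2 : q - 1 < t := by
      rw [ht]; linarith [Int.fract_lt_one (q - x0)]
    have htz : ((t : ℝ) : AddCircle (1 : ℝ)) = z := by
      rw [← hx0, QuotientAddGroup.eq_iff_sub_mem, AddSubgroup.mem_zmultiples_iff]
      refine ⟨⌊q - x0⌋, ?_⟩
      simp only [zsmul_eq_mul, mul_one, ht, Int.fract]
      ring
    set P : ℕ → Prop := fun k => t ≤ c k with hP
    have hP0 : P 0 := by simpa [hP, hc] using ht1
    set k := Nat.findGreatest P K with hkdef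
    have hk1 : t ≤ c k := Nat.findGreatest_spec (Nat.zero_le K) hP0
    have hkK : k ≤ K := Nat.findGreatest_le K
    have hkltK : k < K := by
      rcases lt_or_eq_of_le hkK with h | h
      · exact h
      · exfalso
        rw [h] at hk1
        linarith
    have hk2 : c (k + 1) ≤ t := by
      have := Nat.findGreatest_is_greatest (Nat.lt_succ_self k) hkltK
      simp only [hP, not_le] at this
      exact this.le
    have himg : t ∈ G^[k] '' Set.Icc (G q) q := by
      apply intermediate_value_Icc hdown.le (hGc.iterate k).continuousOn
      constructor
      · have : G^[k] (G q) = c (k + 1) := by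
          rw [hc_succ]
          simp [hc, Function.iterate_succ_apply', ← Function.iterate_succ_apply]
        rw [this]; exact hk2
      · exact hk1
    obtain ⟨s, hs, hst⟩ := himg
    refine ⟨k, hkK, s, ?_, ?_⟩
    · rwa [min_eq_right hdown.le, max_eq_left hdown.le]
    · rw [hGl_iter k s, hst, htz]
  · -- q < G q, increasing case
    have hstep : ∀ k, c k < c (k + 1) := by
      intro k
      induction k with
      | zero => simpa [hc] using hup
      | succ k ih =>
        have h := hGm ih
        rwa [← hc_succ (k + 1), ← hc_succ k] at h
    have hmono : StrictMono c := strictMono_nat_of_lt_succ hstep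
    have hub : ∃ K, q + 1 ≤ c K := by
      by_contra hb
      push_neg at hb
      have hbdd : BddAbove (Set.range c) := ⟨q + 1, by
        rintro y ⟨k, rfl⟩; exact (hb k).le⟩
      have hlim : Tendsto c atTop (𝓝 (⨆ k, c k)) :=
        tendsto_atTop_ciSup hmono.monotone hbdd
      have h1 : Tendsto (fun k => c (k + 1)) atTop (𝓝 (⨆ k, c k)) :=
        hlim.comp (tendsto_add_atTop_nat 1)
      have h2 : Tendsto (fun k => G (c k)) atTop (𝓝 (G (⨆ k, c k))) :=
        (hGc.tendsto _).comp hlim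
      have h3 : Tendsto (fun k => c (k + 1)) atTop (𝓝 (G (⨆ k, c k))) :=
        h2.congr fun k => (hc_succ k).symm
      exact no_fix _ (tendsto_nhds_unique h3 h1)
    obtain ⟨K, hK⟩ := hub
    refine ⟨K, fun z => ?_⟩
    obtain ⟨x0, hx0⟩ := QuotientAddGroup.mk_surjective z
    set t : ℝ := q + Int.fract (x0 - q) with ht
    have ht1 : q ≤ t := by
      rw [ht]; linarith [Int.fract_nonneg (x0 - q)]
    have ht2 : t < q + 1 := by
      rw [ht]; linarith [Int.fract_lt_one (x0 - q)]
    have htz : ((t : ℝ) : AddCircle (1 : ℝ)) = z := by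
      rw [← hx0, QuotientAddGroup.eq_iff_sub_mem, AddSubgroup.mem_zmultiples_iff]
      refine ⟨-⌊x0 - q⌋, ?_⟩
      simp only [zsmul_eq_mul, mul_one, ht, Int.fract]
      push_cast
      ring
    set P : ℕ → Prop := fun k => c k ≤ t with hP
    have hP0 : P 0 := by simpa [hP, hc] using ht1
    set k := Nat.findGreatest P K with hkdef
    have hk1 : c k ≤ t := Nat.findGreatest_spec (Nat.zero_le K) hP0
    have hkK : k ≤ K := Nat.findGreatest_le K
    have hkltK : k < K := by
      rcases lt_or_eq_of_le hkK with h | h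
      · exact h
      · exfalso
        rw [h] at hk1
        linarith
    have hk2 : t ≤ c (k + 1) := by
      have := Nat.findGreatest_is_greatest (Nat.lt_succ_self k) hkltK
      simp only [hP, not_le] at this
      exact this.le
    have himg : t ∈ G^[k] '' Set.Icc q (G q) := by
      apply intermediate_value_Icc hup.le (hGc.iterate k).continuousOn
      constructor
      · exact hk1
      · have : G^[k] (G q) = c (k + 1) := by
          rw [hc_succ]
          simp [hc, Function.iterate_succ_apply', ← Function.iterate_succ_apply]
        rw [this]; exact hk2
    obtain ⟨s, hs, hst⟩ := himg
    refine ⟨k, hkK, s, ?_, ?_⟩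
    · rwa [min_eq_left hup.le, max_eq_right hup.le]
    · rw [hGl_iter k s, hst, htz]

/-- near any cluster point of an orbit there is a small arc whose iterates cover everything -/
private lemma aux_main_cover (f : AddCircle (1 : ℝ) ≃ₜ AddCircle (1 : ℝ)) (F : ℝ → ℝ)
    (hFc : Continuous F) (hFm : StrictMono F)
    (hlift : ∀ x : ℝ, f (x : AddCircle (1 : ℝ)) = ((F x : ℝ) : AddCircle (1 : ℝ)))
    (nper : ∀ (x : ℝ) (n : ℕ), 0 < n →
      (⇑f)^[n] (x : AddCircle (1 : ℝ)) ≠ (x : AddCircle (1 : ℝ)))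
    (x p : AddCircle (1 : ℝ))
    (hp : MapClusterPt p atTop (fun n : ℕ => (⇑f)^[n] x)) {ε : ℝ} (hε : 0 < ε) :
    ∃ m K : ℕ, 0 < m ∧ ∀ z : AddCircle (1 : ℝ), ∃ k ≤ K, ∃ w : AddCircle (1 : ℝ),
      dist w p < ε ∧ (⇑f)^[k * m] w = z := by
  have freq := mapClusterPt_iff_frequently.1 hp (Metric.ball p (ε / 4))
    (Metric.ball_mem_nhds p (by linarith))
  rw [frequently_atTop] at freq
  obtain ⟨n₁, -, h1⟩ := freq 0
  obtain ⟨n₂, hn2, h2⟩ := freq (n₁ + 1)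
  obtain ⟨xt, rfl⟩ := QuotientAddGroup.mk_surjective x
  set m := n₂ - n₁ with hmdef
  have hm0 : 0 < m := by omega
  set q : ℝ := F^[n₁] xt with hq
  have hq1 : ((q : ℝ) : AddCircle (1 : ℝ)) = (⇑f)^[n₁] (xt : AddCircle (1 : ℝ)) :=
    (aux_lift_iter f F hlift n₁ xt).symm
  have hq2 : ((F^[m] q : ℝ) : AddCircle (1 : ℝ)) = (⇑f)^[n₂] (xt : AddCircle (1 : ℝ)) := by
    rw [hq, ← Function.iterate_add_apply, aux_lift_iter f F hlift]
    congr 2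
    omega
  set k₀ : ℤ := round (F^[m] q - q) with hk₀
  set G : ℝ → ℝ := fun t => F^[m] t - k₀ with hG
  have hGc : Continuous G := (hFc.iterate m).sub continuous_const
  have hGm : StrictMono G := fun a b h => sub_lt_sub_right (hFm.iterate m h) _
  have hGl : ∀ t : ℝ, (⇑f)^[m] (t : AddCircle (1 : ℝ)) = ((G t : ℝ) : AddCircle (1 : ℝ)) := by
    intro t
    rw [aux_lift_iter f F hlift]
    rw [QuotientAddGroup.eq_iff_sub_mem, AddSubgroup.mem_zmultiples_iff]
    exact ⟨k₀, by simp [hG]⟩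
  have hdist : |G q - q| < ε / 2 := by
    have h3 : dist ((F^[m] q : ℝ) : AddCircle (1 : ℝ)) ((q : ℝ) : AddCircle (1 : ℝ)) < ε / 2 := by
      rw [hq1, hq2]
      calc dist ((⇑f)^[n₂] (xt : AddCircle (1 : ℝ))) ((⇑f)^[n₁] (xt : AddCircle (1 : ℝ)))
          ≤ dist ((⇑f)^[n₂] (xt : AddCircle (1 : ℝ))) p
            + dist p ((⇑f)^[n₁] (xt : AddCircle (1 : ℝ))) := dist_triangle _ _ _
        _ < ε / 2 := by
            have := Metric.mem_ball.1 h1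
            have := Metric.mem_ball.1 h2
            rw [dist_comm p]
            linarith [Metric.mem_ball.1 h1, Metric.mem_ball.1 h2]
    have h4 : dist ((F^[m] q : ℝ) : AddCircle (1 : ℝ)) ((q : ℝ) : AddCircle (1 : ℝ))
        = |G q - q| := by
      rw [dist_eq_norm, ← QuotientAddGroup.mk_sub, AddCircle.norm_eq]
      simp only [inv_one, one_mul, mul_one]
      congr 1
      simp [hG, hk₀]
      ring
    rwa [h4] at h3
  obtain ⟨K, hK⟩ := aux_cover f nper m hm0 G hGc hGm hGl q
  refine ⟨m, K, hm0, fun z => ?_⟩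
  obtain ⟨k, hkK, s, hs, hfs⟩ := hK z
  refine ⟨k, hkK, ((s : ℝ) : AddCircle (1 : ℝ)), ?_, hfs⟩
  have h5 : dist ((s : ℝ) : AddCircle (1 : ℝ)) ((q : ℝ) : AddCircle (1 : ℝ)) ≤ |s - q| := by
    rw [dist_eq_norm, ← QuotientAddGroup.mk_sub]
    exact QuotientAddGroup.norm_mk_le_norm.trans_eq (Real.norm_eq_abs _)
  have h6 : |s - q| ≤ |G q - q| := by
    have hminmax : max q (G q) - min q (G q) = |G q - q| := max_sub_min_eq_abs q (G q)
    have hq_mem_lo : min q (G q) ≤ q := min_le_left _ _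
    have hq_mem_hi : q ≤ max q (G q) := le_max_left _ _
    rw [abs_le]
    constructor
    · linarith [hs.1, hs.2, hminmax, abs_nonneg (G q - q)]
    · linarith [hs.1, hs.2, hminmax]
  have h7 : dist ((q : ℝ) : AddCircle (1 : ℝ)) p < ε / 4 := by
    rw [hq1]
    exact Metric.mem_ball.1 h1
  calc dist ((s : ℝ) : AddCircle (1 : ℝ)) p
      ≤ dist ((s : ℝ) : AddCircle (1 : ℝ)) ((q : ℝ) : AddCircle (1 : ℝ))
        + dist ((q : ℝ) : AddCircle (1 : ℝ)) p := dist_triangle _ _ _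
    _ < ε := by
        have := h5.trans h6
        linarith

/-- If an orientation-preserving circle homeomorphism `f` (with lift `F`) has irrational
rotation number, then the ω-limit set `ω(x)` (cluster points of the forward orbit) is the
same set for every point `x`, and this set is either the whole circle or a perfect,
nowhere dense subset of the circle. -/
theorem stmt_5 (f : AddCircle (1 : ℝ) ≃ₜ AddCircle (1 : ℝ)) (F : ℝ → ℝ)
    (hFc : Continuous F) (hFm : StrictMono F) (hFp : ∀ x, F (x + 1) = F x + 1)
    (hlift : ∀ x : ℝ, f (x : AddCircle (1 : ℝ)) = ((F x : ℝ) : AddCircle (1 : ℝ)))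
    (τ : ℝ) (hτ : ∀ x : ℝ, Tendsto (fun n : ℕ => (F^[n] x - x) / n) atTop (𝓝 τ))
    (hirr : Irrational τ)
    (ω : AddCircle (1 : ℝ) → Set (AddCircle (1 : ℝ)))
    (hω : ∀ x, ω x = {y | MapClusterPt y atTop (fun n : ℕ => (⇑f)^[n] x)}) :
    (∀ x y, ω x = ω y) ∧
      ∀ x, ω x = Set.univ ∨ (Perfect (ω x) ∧ IsNowhereDense (ω x)) := by
  have nper : ∀ (x : ℝ) (n : ℕ), 0 < n →
      (⇑f)^[n] (x : AddCircle (1 : ℝ)) ≠ (x : AddCircle (1 : ℝ)) :=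
    aux_no_per f F hFp hlift τ hτ hirr
  -- all ω-limit sets coincide
  have hsub : ∀ x y, ω x ⊆ ω y := by
    intro x y p hp
    rw [hω] at hp ⊢
    rw [Set.mem_setOf_eq] at hp ⊢
    rw [mapClusterPt_iff_frequently]
    intro U hU
    obtain ⟨ε, hε, hball⟩ := Metric.mem_nhds_iff.1 hU
    obtain ⟨m, K, hm0, hcov⟩ := aux_main_cover f F hFc hFm hlift nper x p hp hε
    rw [frequently_atTop]
    intro N
    obtain ⟨k, hkK, w, hw, hfw⟩ := hcov ((⇑f)^[N + K * m] y)
    refine ⟨N + (K - k) * m, Nat.le_add_right N _, ?_⟩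
    have hinj : Function.Injective ((⇑f)^[k * m]) := f.injective.iterate _
    have harith : k * m + (N + (K - k) * m) = N + K * m := by
      have h := Nat.sub_add_cancel hkK
      calc k * m + (N + (K - k) * m) = N + (K - k + k) * m := by ring
        _ = N + K * m := by rw [h]
    have heq : (⇑f)^[k * m] ((⇑f)^[N + (K - k) * m] y) = (⇑f)^[k * m] w := by
      rw [← Function.iterate_add_apply, harith, hfw]
    have := hinj heq
    rw [this]
    exact hball (Metric.mem_ball.2 hw)
  have hsame : ∀ x y, ω x = ω y := fun x y => (hsub x y).antisymm (hsub y x)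
  refine ⟨hsame, ?_⟩
  intro x
  have hcl : IsClosed (ω x) := by
    rw [hω]
    exact isClosed_setOf_clusterPt
  have hfwd : ∀ z ∈ ω x, f z ∈ ω x := by
    intro z hz
    have h1 : MapClusterPt z atTop (fun n : ℕ => (⇑f)^[n] x) := by
      rw [hω] at hz; exact hz
    have h2 := h1.continuousAt_comp f.continuous.continuousAt
    have h3 : (⇑f ∘ fun n : ℕ => (⇑f)^[n] x) = fun n : ℕ => (⇑f)^[n] (f x) := by
      funext n
      simp only [Function.comp_apply]
      rw [← Function.iterate_succ_apply' (⇑f) n x, Function.iterate_succ_apply]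
    rw [h3] at h2
    have : f z ∈ ω (f x) := by rw [hω]; exact h2
    rwa [hsame (f x) x] at this
  have horb : ∀ z ∈ ω x, ∀ n : ℕ, (⇑f)^[n] z ∈ ω x := by
    intro z hz n
    induction n with
    | zero => simpa using hz
    | succ n ih =>
      rw [Function.iterate_succ_apply']
      exact hfwd _ ih
  by_cases hint : (interior (ω x)).Nonempty
  · left
    obtain ⟨p, hp⟩ := hint
    obtain ⟨ε, hε, hball⟩ := Metric.mem_nhds_iff.1 (mem_interior_iff_mem_nhds.1 hp)
    have hpω : MapClusterPt p atTop (fun n : ℕ => (⇑f)^[n] x) := by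
      have : p ∈ ω x := interior_subset hp
      rw [hω] at this
      exact this
    obtain ⟨m, K, hm0, hcov⟩ := aux_main_cover f F hFc hFm hlift nper x p hpω hε
    rw [Set.eq_univ_iff_forall]
    intro z
    obtain ⟨k, -, w, hw, hfw⟩ := hcov z
    have hwω : w ∈ ω x := hball (Metric.mem_ball.2 hw)
    rw [← hfw]
    exact horb w hwω (k * m)
  · right
    constructor
    · refine ⟨hcl, ?_⟩
      intro z hz
      rw [accPt_iff_nhds]
      intro U hU
      by_contra hcon
      push_neg at hcon
      have hzz : MapClusterPt z atTop (fun n : ℕ => (⇑f)^[n] z) := by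
        have : z ∈ ω z := by rw [hsame z x]; exact hz
        rw [hω] at this
        exact this
      have freq := mapClusterPt_iff_frequently.1 hzz U hU
      rw [frequently_atTop] at freq
      obtain ⟨n, hn1, hnU⟩ := freq 1
      have hfix : (⇑f)^[n] z = z := hcon _ ⟨hnU, horb z hz n⟩
      obtain ⟨zt, rfl⟩ := QuotientAddGroup.mk_surjective z
      exact nper zt n (by omega) hfix
    · rw [IsNowhereDense, hcl.closure_eq]
      exact Set.not_nonempty_iff_eq_empty.1 hint
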